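/- Let m ≥ 1 and k ≥ 0 with k+1 ≤ m, and let i ∈ [k]. Then for every real q > 0: Σ_{π∈P(m,k+1)} q^{mak(π) + k − nrinv(g(B_{i+1}),π)} = q^{i} · Σ_{π∈P(m,k+1)} q^{mak(π)}, where the exponents are integers. -/

import Mathlib

open Finset Polynomial

/-- A partition of `[n] = {1,…,n}` into `k` nonempty blocks `B₁-⋯-B_k`, indexed so that
`min B₁ < ⋯ < min B_k`, encoded by its restricted-growth word `w : Fin n → Fin k`
(the element `i+1` of `[n]` lies in the block `B_{w i + 1}`). -/
structure SetPartition (n k : ℕ) where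
  w : Fin n → Fin k
  surj : Function.Surjective w
  rgf : ∀ i : Fin n, ∀ c : Fin k, c < w i → ∃ j : Fin n, j < i ∧ w j = c

namespace SetPartition

variable {n k : ℕ}

instance : DecidableEq (SetPartition n k) := fun a b =>
  decidable_of_iff (a.w = b.w) (by cases a; cases b; simp)

noncomputable instance : Fintype (SetPartition n k) :=
  Fintype.ofInjective (fun π => π.w) (fun a b h => by cases a; cases b; simp_all)

/-- The set of openers (smallest elements of their blocks). -/
def openers (π : SetPartition n k) : Finset (Fin n) :=
  univ.filter fun i => ∀ j, j < i → π.w j ≠ π.w i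

/-- The set of closers (largest elements of their blocks). -/
def closers (π : SetPartition n k) : Finset (Fin n) :=
  univ.filter fun i => ∀ j, i < j → π.w j ≠ π.w i

/-- Closers that are not openers (`F_s`). -/
def closersOnly (π : SetPartition n k) : Finset (Fin n) := π.closers \ π.openers

/-- Openers that are not closers (`O_s`). -/
def openersOnly (π : SetPartition n k) : Finset (Fin n) := π.openers \ π.closers

/-- Elements that are neither openers nor closers (`P`, the transients). -/
def transients (π : SetPartition n k) : Finset (Fin n) :=
  univ \ (π.openers ∪ π.closers)

def ros (π : SetPartition n k) : ℕ :=
  ∑ i, (π.openers.filter fun j => j < i ∧ π.w i < π.w j).card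
def rob (π : SetPartition n k) : ℕ :=
  ∑ i, (π.openers.filter fun j => i < j ∧ π.w i < π.w j).card
def rcs (π : SetPartition n k) : ℕ :=
  ∑ i, (π.closers.filter fun j => j < i ∧ π.w i < π.w j).card
def rcb (π : SetPartition n k) : ℕ :=
  ∑ i, (π.closers.filter fun j => i < j ∧ π.w i < π.w j).card
def los (π : SetPartition n k) : ℕ :=
  ∑ i, (π.openers.filter fun j => j < i ∧ π.w j < π.w i).card
def lob (π : SetPartition n k) : ℕ :=
  ∑ i, (π.openers.filter fun j => i < j ∧ π.w j < π.w i).card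
def lcs (π : SetPartition n k) : ℕ :=
  ∑ i, (π.closers.filter fun j => j < i ∧ π.w j < π.w i).card
def lcb (π : SetPartition n k) : ℕ :=
  ∑ i, (π.closers.filter fun j => i < j ∧ π.w j < π.w i).card

def mak (π : SetPartition n k) : ℕ := π.ros + π.lcs
def mak' (π : SetPartition n k) : ℕ := π.lob + π.rcb
def lmak (π : SetPartition n k) : ℤ :=
  (n : ℤ) * ((k : ℤ) - 1) - ((π.los : ℤ) + (π.rcs : ℤ))
def lmak' (π : SetPartition n k) : ℤ :=
  (n : ℤ) * ((k : ℤ) - 1) - ((π.lcb : ℤ) + (π.rob : ℤ))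

/-- `rinv(b,π) = #{a : a < b, w_a > w_b}`. -/
def rinv (π : SetPartition n k) (b : Fin n) : ℕ :=
  (univ.filter fun a => a < b ∧ π.w b < π.w a).card

/-- `nrinv(b,π) = #{a : a > b, w_a > w_b}`. -/
def nrinv (π : SetPartition n k) (b : Fin n) : ℕ :=
  (univ.filter fun a => b < a ∧ π.w b < π.w a).card

/-- `linv(b,π) = #{a : a > b, w_a < w_b}`. -/
def linv (π : SetPartition n k) (b : Fin n) : ℕ :=
  (univ.filter fun a => b < a ∧ π.w a < π.w b).card

/-- `rinv(X,π) = Σ_{b ∈ X} rinv(b,π)`. -/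
def rinvSet (π : SetPartition n k) (X : Finset (Fin n)) : ℕ := ∑ b ∈ X, π.rinv b

/-- `linv(X,π) = Σ_{b ∈ X} linv(b,π)`. -/
def linvSet (π : SetPartition n k) (X : Finset (Fin n)) : ℕ := ∑ b ∈ X, π.linv b

/-- `g(B_c)`: the largest element of the block with index `c`. -/
def blockMax (π : SetPartition n k) (c : Fin k) : Fin n :=
  (univ.filter fun i => π.w i = c).max' (by
    obtain ⟨i, hi⟩ := π.surj c
    exact ⟨i, mem_filter.2 ⟨mem_univ i, hi⟩⟩)

/-- The block with index `c` is incomplete at stage `m`, i.e. it meets the first `m`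
elements of `[n]` but is not contained in them. -/
def IncompleteAt (π : SetPartition n k) (m : ℕ) (c : Fin k) : Prop :=
  (∃ j : Fin n, (j : ℕ) < m ∧ π.w j = c) ∧ ∃ j : Fin n, m ≤ (j : ℕ) ∧ π.w j = c

instance (π : SetPartition n k) (m : ℕ) : DecidablePred (π.IncompleteAt m) := fun c =>
  inferInstanceAs (Decidable
    ((∃ j : Fin n, (j : ℕ) < m ∧ π.w j = c) ∧ ∃ j : Fin n, m ≤ (j : ℕ) ∧ π.w j = c))

/-- `l_i(π)`: the number of blocks incomplete at stage `i-1`; here the element `i` of `[n]`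
is represented by the index `i - 1 : Fin n`, so the first `i - 1` elements are those with
index `< i`. -/
def lTrace (π : SetPartition n k) (i : Fin n) : ℕ :=
  (univ.filter fun c => π.IncompleteAt (i : ℕ) c).card

/-- `γ_i(π)`: one plus the number of blocks incomplete at stage `i` lying to the left of the
block containing `i`. -/
def gammaTrace (π : SetPartition n k) (i : Fin n) : ℕ :=
  1 + (univ.filter fun c => π.IncompleteAt ((i : ℕ) + 1) c ∧ c < π.w i).card

end SetPartition

/-- The `q`-Stirling numbers of the second kind `S_q(n,k) ∈ ℤ[q]`, with
`S_q(n,k) = q^{k-1} S_q(n-1,k-1) + [k]_q S_q(n-1,k)`, `S_q(0,0) = 1`, and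
`S_q(n,k) = 0` when exactly one of `n,k` is zero (whence also for `k > n`). -/
noncomputable def qStirling : ℕ → ℕ → Polynomial ℤ
  | 0, 0 => 1
  | 0, _ + 1 => 0
  | _ + 1, 0 => 0
  | n + 1, k + 1 =>
      X ^ k * qStirling n k + (∑ i ∈ Finset.range (k + 1), X ^ i) * qStirling n (k + 1)

namespace SetPartition

variable {n K : ℕ}

lemma ext' {π₁ π₂ : SetPartition n K} (h : π₁.w = π₂.w) : π₁ = π₂ := by
  cases π₁; cases π₂; simp_all

lemma w_blockMax (π : SetPartition n K) (c : Fin K) : π.w (π.blockMax c) = c := by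
  have := Finset.max'_mem (Finset.univ.filter fun i => π.w i = c)
    (by obtain ⟨i, hi⟩ := π.surj c; exact ⟨i, Finset.mem_filter.2 ⟨Finset.mem_univ i, hi⟩⟩)
  simpa [blockMax] using (Finset.mem_filter.1 this).2

lemma le_blockMax (π : SetPartition n K) {j : Fin n} {c : Fin K} (h : π.w j = c) :
    j ≤ π.blockMax c :=
  Finset.le_max' _ j (Finset.mem_filter.2 ⟨Finset.mem_univ j, h⟩)

/-- The first occurrence of letter `c`. -/
def firstOcc (π : SetPartition n K) (c : Fin K) : Fin n :=
  (Finset.univ.filter fun i => π.w i = c).min' (by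
    obtain ⟨i, hi⟩ := π.surj c
    exact ⟨i, Finset.mem_filter.2 ⟨Finset.mem_univ i, hi⟩⟩)

lemma w_firstOcc (π : SetPartition n K) (c : Fin K) : π.w (π.firstOcc c) = c := by
  have := Finset.min'_mem (Finset.univ.filter fun i => π.w i = c)
    (by obtain ⟨i, hi⟩ := π.surj c; exact ⟨i, Finset.mem_filter.2 ⟨Finset.mem_univ i, hi⟩⟩)
  simpa [firstOcc] using (Finset.mem_filter.1 this).2

lemma firstOcc_le (π : SetPartition n K) {j : Fin n} {c : Fin K} (h : π.w j = c) :
    π.firstOcc c ≤ j :=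
  Finset.min'_le _ j (Finset.mem_filter.2 ⟨Finset.mem_univ j, h⟩)

/-- `i` is the smallest element of its block. -/
def IsOpener (π : SetPartition n K) (i : Fin n) : Prop := ∀ j, j < i → π.w j ≠ π.w i

/-- `i` is the largest element of its block. -/
def IsCloser (π : SetPartition n K) (i : Fin n) : Prop := ∀ j, i < j → π.w j ≠ π.w i

instance (π : SetPartition n K) : DecidablePred π.IsOpener := fun i =>
  inferInstanceAs (Decidable (∀ j, j < i → π.w j ≠ π.w i))

instance (π : SetPartition n K) : DecidablePred π.IsCloser := fun i =>
  inferInstanceAs (Decidable (∀ j, i < j → π.w j ≠ π.w i))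

lemma isOpener_firstOcc (π : SetPartition n K) (c : Fin K) : π.IsOpener (π.firstOcc c) := by
  intro j hj hw
  exact absurd (π.firstOcc_le (by rw [hw, π.w_firstOcc])) (not_le.2 hj)

lemma isCloser_blockMax (π : SetPartition n K) (c : Fin K) : π.IsCloser (π.blockMax c) := by
  intro j hj hw
  exact absurd (π.le_blockMax (by rw [hw, π.w_blockMax])) (not_le.2 hj)

lemma IsOpener.eq_firstOcc {π : SetPartition n K} {i : Fin n} (h : π.IsOpener i) :
    i = π.firstOcc (π.w i) := by
  rcases lt_trichotomy i (π.firstOcc (π.w i)) with hlt | he | hgt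
  · exact absurd (π.firstOcc_le rfl) (not_le.2 hlt)
  · exact he
  · exact absurd (π.w_firstOcc (π.w i)) (h _ hgt)

lemma IsCloser.eq_blockMax {π : SetPartition n K} {i : Fin n} (h : π.IsCloser i) :
    i = π.blockMax (π.w i) := by
  rcases lt_trichotomy i (π.blockMax (π.w i)) with hlt | he | hgt
  · exact absurd (π.w_blockMax (π.w i)) (h _ hlt)
  · exact he
  · exact absurd (π.le_blockMax rfl) (not_le.2 hgt)

lemma card_opener_filter (π : SetPartition n K) (P : Fin K → Prop) [DecidablePred P] :
    (Finset.univ.filter fun j => π.IsOpener j ∧ P (π.w j)).card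
      = (Finset.univ.filter P).card := by
  apply Finset.card_bij (fun j _ => π.w j)
  · intro j hj
    exact Finset.mem_filter.2 ⟨Finset.mem_univ _, (Finset.mem_filter.1 hj).2.2⟩
  · intro a ha b hb hw
    have hao := (Finset.mem_filter.1 ha).2.1
    have hbo := (Finset.mem_filter.1 hb).2.1
    rcases lt_trichotomy a b with h | h | h
    · exact absurd hw (hbo a h)
    · exact h
    · exact absurd hw.symm (hao b h)
  · intro c hc
    exact ⟨π.firstOcc c, Finset.mem_filter.2 ⟨Finset.mem_univ _,
      π.isOpener_firstOcc c, by rw [π.w_firstOcc]; exact (Finset.mem_filter.1 hc).2⟩,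
      (π.w_firstOcc c)⟩

lemma card_closer_filter (π : SetPartition n K) (P : Fin K → Prop) [DecidablePred P] :
    (Finset.univ.filter fun j => π.IsCloser j ∧ P (π.w j)).card
      = (Finset.univ.filter P).card := by
  apply Finset.card_bij (fun j _ => π.w j)
  · intro j hj
    exact Finset.mem_filter.2 ⟨Finset.mem_univ _, (Finset.mem_filter.1 hj).2.2⟩
  · intro a ha b hb hw
    have hao := (Finset.mem_filter.1 ha).2.1
    have hbo := (Finset.mem_filter.1 hb).2.1
    rcases lt_trichotomy a b with h | h | h
    · exact absurd hw.symm (hao b h)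
    · exact h
    · exact absurd hw (hbo a h)
  · intro c hc
    exact ⟨π.blockMax c, Finset.mem_filter.2 ⟨Finset.mem_univ _,
      π.isCloser_blockMax c, by rw [π.w_blockMax]; exact (Finset.mem_filter.1 hc).2⟩,
      (π.w_blockMax c)⟩

lemma closer_letter_eq {π : SetPartition n K} {j : Fin n} {c : Fin K}
    (hj : π.IsCloser j) (hw : π.w j = c) : j = π.blockMax c := by
  rw [← hw]; exact hj.eq_blockMax

/-- `ros` as a double sum of indicators. -/
lemma ros_eq (π : SetPartition n K) :
    π.ros = ∑ i, ∑ j, if π.IsOpener j ∧ j < i ∧ π.w i < π.w j then 1 else 0 := by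
  unfold ros openers
  refine Finset.sum_congr rfl fun i _ => ?_
  rw [Finset.filter_filter, Finset.card_filter]
  exact Finset.sum_congr rfl fun j _ => by
    simp only [IsOpener]
    exact if_congr Iff.rfl rfl rfl

lemma lcs_eq (π : SetPartition n K) :
    π.lcs = ∑ i, ∑ j, if π.IsCloser j ∧ j < i ∧ π.w j < π.w i then 1 else 0 := by
  unfold lcs closers
  refine Finset.sum_congr rfl fun i _ => ?_
  rw [Finset.filter_filter, Finset.card_filter]
  exact Finset.sum_congr rfl fun j _ => by
    simp only [IsCloser]
    exact if_congr Iff.rfl rfl rfl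

lemma nrinv_eq (π : SetPartition n K) (b : Fin n) :
    π.nrinv b = ∑ a, if b < a ∧ π.w b < π.w a then 1 else 0 := by
  unfold nrinv
  rw [Finset.card_filter]

lemma card_lt_add_card_gt (d : Fin K) :
    (Finset.univ.filter fun c => c < d).card + (Finset.univ.filter fun c => d < c).card + 1
      = K := by
  have h1 : (Finset.univ.filter fun c => c < d) ∪ (Finset.univ.filter fun c => d < c)
      = Finset.univ.filter (· ≠ d) := by
    ext c
    simp only [Finset.mem_union, Finset.mem_filter, Finset.mem_univ, true_and]
    constructor
    · rintro (h | h) he <;> subst he <;> exact lt_irrefl _ h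
    · intro h; exact Ne.lt_or_gt h
  have h2 : Disjoint (Finset.univ.filter fun c => c < d)
      (Finset.univ.filter fun c => d < c) := by
    rw [Finset.disjoint_filter]
    intro c _ h1 h2
    exact absurd (h1.trans h2) (lt_irrefl c)
  have h3 := Finset.card_union_of_disjoint h2
  rw [h1] at h3
  rw [Finset.filter_ne', Finset.card_erase_of_mem (Finset.mem_univ d)] at h3
  have hK : 0 < K := d.pos
  simp only [Finset.card_univ, Fintype.card_fin] at h3
  omega

end SetPartition
namespace SetPartition

variable {n K : ℕ}

/-- Append a repeated letter `d` at the end. -/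
def snoc (π : SetPartition n K) (d : Fin K) : SetPartition (n + 1) K where
  w := Fin.snoc π.w d
  surj := fun c => by
    obtain ⟨j, hj⟩ := π.surj c
    exact ⟨j.castSucc, by simpa using hj⟩
  rgf := by
    intro i c hc
    induction i using Fin.lastCases with
    | last =>
        obtain ⟨j, hj⟩ := π.surj c
        exact ⟨j.castSucc, Fin.castSucc_lt_last j, by simpa using hj⟩
    | cast i₀ =>
        simp only [Fin.snoc_castSucc] at hc
        obtain ⟨j, hj, hw⟩ := π.rgf i₀ c hc
        exact ⟨j.castSucc, by simpa using hj, by simpa using hw⟩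

/-- Append a brand new letter at the end. -/
def snocNew (π : SetPartition n K) : SetPartition (n + 1) (K + 1) where
  w := Fin.snoc (fun j => (π.w j).castSucc) (Fin.last K)
  surj := fun c => by
    induction c using Fin.lastCases with
    | last => exact ⟨Fin.last n, by simp⟩
    | cast c₀ =>
        obtain ⟨j, hj⟩ := π.surj c₀
        exact ⟨j.castSucc, by simpa using congrArg Fin.castSucc hj⟩
  rgf := by
    intro i c hc
    induction i using Fin.lastCases with
    | last =>
        simp only [Fin.snoc_last] at hc
        obtain ⟨c₀, rfl⟩ := Fin.exists_castSucc_eq.2 hc.ne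
        obtain ⟨j, hj⟩ := π.surj c₀
        exact ⟨j.castSucc, Fin.castSucc_lt_last j, by simpa using congrArg Fin.castSucc hj⟩
    | cast i₀ =>
        simp only [Fin.snoc_castSucc] at hc
        have hne : c ≠ Fin.last K := Fin.ne_last_of_lt (hc.trans_le (Fin.le_last _))
        obtain ⟨c₀, rfl⟩ := Fin.exists_castSucc_eq.2 hne
        obtain ⟨j, hj, hw⟩ := π.rgf i₀ c₀ (by simpa using hc)
        exact ⟨j.castSucc, by simpa using hj, by simpa using congrArg Fin.castSucc hw⟩

@[simp] lemma snoc_w_castSucc (π : SetPartition n K) (d : Fin K) (j : Fin n) :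
    (π.snoc d).w j.castSucc = π.w j := by simp [snoc]

@[simp] lemma snoc_w_last (π : SetPartition n K) (d : Fin K) :
    (π.snoc d).w (Fin.last n) = d := by simp [snoc]

@[simp] lemma snocNew_w_castSucc (π : SetPartition n K) (j : Fin n) :
    π.snocNew.w j.castSucc = (π.w j).castSucc := by simp [snocNew]

@[simp] lemma snocNew_w_last (π : SetPartition n K) :
    π.snocNew.w (Fin.last n) = Fin.last K := by simp [snocNew]

lemma isOpener_snoc_castSucc (π : SetPartition n K) (d : Fin K) (j : Fin n) :
    (π.snoc d).IsOpener j.castSucc ↔ π.IsOpener j := by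
  constructor
  · intro h j' hj' hw
    exact h j'.castSucc (by simpa using hj') (by simpa using hw)
  · intro h j' hj' hw
    have hne : j' ≠ Fin.last n := Fin.ne_last_of_lt (hj'.trans (Fin.castSucc_lt_last j))
    obtain ⟨j₀, rfl⟩ := Fin.exists_castSucc_eq.2 hne
    exact h j₀ (by simpa using hj') (by simpa using hw)

lemma not_isOpener_snoc_last (π : SetPartition n K) (d : Fin K) :
    ¬ (π.snoc d).IsOpener (Fin.last n) := by
  intro h
  obtain ⟨j, hj⟩ := π.surj d
  exact h j.castSucc (Fin.castSucc_lt_last j) (by simpa using hj)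

lemma isCloser_snoc_castSucc (π : SetPartition n K) (d : Fin K) (j : Fin n) :
    (π.snoc d).IsCloser j.castSucc ↔ (π.IsCloser j ∧ π.w j ≠ d) := by
  constructor
  · intro h
    refine ⟨fun j' hj' hw => h j'.castSucc (by simpa using hj') (by simpa using hw), ?_⟩
    intro hd
    exact h (Fin.last n) (Fin.castSucc_lt_last j) (by simpa using hd.symm)
  · rintro ⟨h, hd⟩ j' hj' hw
    induction j' using Fin.lastCases with
    | last => exact hd (by simpa using hw.symm)
    | cast j₀ => exact h j₀ (by simpa using hj') (by simpa using hw)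

lemma isCloser_last (π : SetPartition (n+1) K) : π.IsCloser (Fin.last n) := by
  intro j hj
  exact absurd (Fin.le_last j) (not_le.2 hj)

lemma isOpener_snocNew_castSucc (π : SetPartition n K) (j : Fin n) :
    π.snocNew.IsOpener j.castSucc ↔ π.IsOpener j := by
  constructor
  · intro h j' hj' hw
    exact h j'.castSucc (by simpa using hj') (by simpa using congrArg Fin.castSucc hw)
  · intro h j' hj' hw
    have hne : j' ≠ Fin.last n := Fin.ne_last_of_lt (hj'.trans (Fin.castSucc_lt_last j))
    obtain ⟨j₀, rfl⟩ := Fin.exists_castSucc_eq.2 hne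
    simp only [snocNew_w_castSucc, Fin.castSucc_inj] at hw
    exact h j₀ (by simpa using hj') hw

lemma isCloser_snocNew_castSucc (π : SetPartition n K) (j : Fin n) :
    π.snocNew.IsCloser j.castSucc ↔ π.IsCloser j := by
  constructor
  · intro h j' hj' hw
    exact h j'.castSucc (by simpa using hj') (by simpa using congrArg Fin.castSucc hw)
  · intro h j' hj' hw
    induction j' using Fin.lastCases with
    | last =>
        simp only [snocNew_w_last, snocNew_w_castSucc] at hw
        exact absurd hw.symm (Fin.castSucc_lt_last _).ne
    | cast j₀ =>
        simp only [snocNew_w_castSucc, Fin.castSucc_inj] at hw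
        exact h j₀ (by simpa using hj') hw

end SetPartition
namespace SetPartition

variable {n K : ℕ}

lemma ros_snoc (π : SetPartition n K) (d : Fin K) :
    (π.snoc d).ros = π.ros + (Finset.univ.filter fun c : Fin K => d < c).card := by
  classical
  rw [ros_eq, Fin.sum_univ_castSucc]
  have h1 : ∀ i₀ : Fin n,
      (∑ j, if (π.snoc d).IsOpener j ∧ j < i₀.castSucc ∧
          (π.snoc d).w i₀.castSucc < (π.snoc d).w j then 1 else 0) =
      ∑ j, if π.IsOpener j ∧ j < i₀ ∧ π.w i₀ < π.w j then 1 else 0 := by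
    intro i₀
    rw [Fin.sum_univ_castSucc]
    have hlast : ¬ ((π.snoc d).IsOpener (Fin.last n) ∧ Fin.last n < i₀.castSucc ∧
        (π.snoc d).w i₀.castSucc < (π.snoc d).w (Fin.last n)) := by
      rintro ⟨h, _, _⟩
      exact π.not_isOpener_snoc_last d h
    rw [if_neg hlast, add_zero]
    refine Finset.sum_congr rfl fun j _ => ?_
    refine if_congr ?_ rfl rfl
    rw [isOpener_snoc_castSucc, Fin.castSucc_lt_castSucc_iff, snoc_w_castSucc,
      snoc_w_castSucc]
  have h2 : (∑ j, if (π.snoc d).IsOpener j ∧ j < Fin.last n ∧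
      (π.snoc d).w (Fin.last n) < (π.snoc d).w j then 1 else 0) =
      (Finset.univ.filter fun c : Fin K => d < c).card := by
    rw [Fin.sum_univ_castSucc]
    have hlast : ¬ ((π.snoc d).IsOpener (Fin.last n) ∧ Fin.last n < Fin.last n ∧
        (π.snoc d).w (Fin.last n) < (π.snoc d).w (Fin.last n)) := by
      rintro ⟨_, h, _⟩; exact absurd h (lt_irrefl _)
    rw [if_neg hlast, add_zero, ← π.card_opener_filter (fun c => d < c),
      Finset.card_filter]
    refine Finset.sum_congr rfl fun j _ => ?_
    refine if_congr ?_ rfl rfl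
    rw [isOpener_snoc_castSucc, snoc_w_last, snoc_w_castSucc]
    have hlt : j.castSucc < Fin.last n := Fin.castSucc_lt_last j
    tauto
  rw [Finset.sum_congr rfl (fun i₀ _ => h1 i₀), h2, ros_eq]

lemma lcs_snoc (π : SetPartition n K) (d : Fin K) :
    (π.snoc d).lcs + π.nrinv (π.blockMax d)
      = π.lcs + (Finset.univ.filter fun c : Fin K => c < d).card := by
  classical
  have key : ∀ i₀ : Fin n,
      (∑ j, if (π.snoc d).IsCloser j ∧ j < i₀.castSucc ∧
          (π.snoc d).w j < (π.snoc d).w i₀.castSucc then 1 else 0)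
        + (if π.blockMax d < i₀ ∧ d < π.w i₀ then 1 else 0) =
      ∑ j, if π.IsCloser j ∧ j < i₀ ∧ π.w j < π.w i₀ then 1 else 0 := by
    intro i₀
    have hmid : (∑ j : Fin n, if π.IsCloser j ∧ π.w j = d ∧ j < i₀ ∧ π.w j < π.w i₀
          then (1:ℕ) else 0)
        = (if π.blockMax d < i₀ ∧ d < π.w i₀ then 1 else 0) := by
      rw [Finset.sum_eq_single (π.blockMax d)]
      · refine if_congr ?_ rfl rfl
        have h1 := π.isCloser_blockMax d
        have h2 := π.w_blockMax d
        rw [h2]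
        tauto
      · intro j _ hj
        rw [if_neg]
        rintro ⟨hc, hw, _⟩
        exact hj (closer_letter_eq hc hw)
      · intro h
        exact absurd (Finset.mem_univ _) h
    rw [← hmid, Fin.sum_univ_castSucc]
    have hlast : ¬ ((π.snoc d).IsCloser (Fin.last n) ∧ Fin.last n < i₀.castSucc ∧
        (π.snoc d).w (Fin.last n) < (π.snoc d).w i₀.castSucc) := by
      rintro ⟨_, h, _⟩
      exact absurd ((Fin.le_last _).trans_lt h) (lt_irrefl _)
    rw [if_neg hlast, add_zero, ← Finset.sum_add_distrib]
    refine Finset.sum_congr rfl fun j _ => ?_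
    have hiff : ((π.snoc d).IsCloser j.castSucc ∧ j.castSucc < i₀.castSucc ∧
          (π.snoc d).w j.castSucc < (π.snoc d).w i₀.castSucc)
        ↔ ((π.IsCloser j ∧ π.w j ≠ d) ∧ j < i₀ ∧ π.w j < π.w i₀) := by
      rw [isCloser_snoc_castSucc, Fin.castSucc_lt_castSucc_iff, snoc_w_castSucc,
        snoc_w_castSucc]
    by_cases hS : (π.snoc d).IsCloser j.castSucc ∧ j.castSucc < i₀.castSucc ∧
        (π.snoc d).w j.castSucc < (π.snoc d).w i₀.castSucc
    · obtain ⟨⟨hc, hne⟩, hrest⟩ := hiff.1 hS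
      rw [if_pos hS, if_neg (by rintro ⟨_, hd, _⟩; exact hne hd),
        if_pos ⟨hc, hrest⟩]
    · rw [if_neg hS, zero_add]
      by_cases hM : π.IsCloser j ∧ π.w j = d ∧ j < i₀ ∧ π.w j < π.w i₀
      · rw [if_pos hM, if_pos ⟨hM.1, hM.2.2⟩]
      · rw [if_neg hM, if_neg]
        rintro ⟨hc, hrest⟩
        by_cases hd : π.w j = d
        · exact hM ⟨hc, hd, hrest⟩
        · exact hS (hiff.2 ⟨⟨hc, hd⟩, hrest⟩)
  have hlastrow : (∑ j, if (π.snoc d).IsCloser j ∧ j < Fin.last n ∧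
      (π.snoc d).w j < (π.snoc d).w (Fin.last n) then 1 else 0) =
      (Finset.univ.filter fun c : Fin K => c < d).card := by
    rw [Fin.sum_univ_castSucc]
    have hlast : ¬ ((π.snoc d).IsCloser (Fin.last n) ∧ Fin.last n < Fin.last n ∧
        (π.snoc d).w (Fin.last n) < (π.snoc d).w (Fin.last n)) := by
      rintro ⟨_, h, _⟩; exact absurd h (lt_irrefl _)
    rw [if_neg hlast, add_zero, ← π.card_closer_filter (fun c => c < d),
      Finset.card_filter]
    refine Finset.sum_congr rfl fun j _ => ?_
    refine if_congr ?_ rfl rfl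
    rw [isCloser_snoc_castSucc, snoc_w_last, snoc_w_castSucc]
    have hlt : j.castSucc < Fin.last n := Fin.castSucc_lt_last j
    constructor
    · rintro ⟨⟨h1, _⟩, _, h3⟩; exact ⟨h1, h3⟩
    · rintro ⟨h1, h3⟩; exact ⟨⟨h1, fun he => absurd he.symm h3.ne'⟩, hlt, h3⟩
  have hn : π.nrinv (π.blockMax d) = ∑ i₀ : Fin n,
      if π.blockMax d < i₀ ∧ d < π.w i₀ then 1 else 0 := by
    rw [nrinv_eq]
    refine Finset.sum_congr rfl fun a _ => ?_
    rw [π.w_blockMax d]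
  rw [lcs_eq, Fin.sum_univ_castSucc, hlastrow, hn]
  have hsum : (∑ i₀ : Fin n, ∑ j, if (π.snoc d).IsCloser j ∧ j < i₀.castSucc ∧
          (π.snoc d).w j < (π.snoc d).w i₀.castSucc then 1 else 0)
        + (∑ i₀ : Fin n, if π.blockMax d < i₀ ∧ d < π.w i₀ then 1 else 0) = π.lcs := by
    rw [lcs_eq π, ← Finset.sum_add_distrib]
    exact Finset.sum_congr rfl fun i₀ _ => key i₀
  omega

lemma mak_snoc (π : SetPartition n K) (d : Fin K) :
    (π.snoc d).mak + π.nrinv (π.blockMax d) + 1 = π.mak + K := by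
  have h1 := π.ros_snoc d
  have h2 := π.lcs_snoc d
  have h3 := card_lt_add_card_gt d
  unfold mak
  omega

end SetPartition
namespace SetPartition

variable {n K : ℕ}

lemma blockMax_snoc_ne (π : SetPartition n K) {d c : Fin K} (h : c ≠ d) :
    (π.snoc d).blockMax c = (π.blockMax c).castSucc := by
  apply le_antisymm
  · apply Finset.max'_le
    intro j hj
    have hw : (π.snoc d).w j = c := (Finset.mem_filter.1 hj).2
    induction j using Fin.lastCases with
    | last => exact absurd hw (by simpa using h.symm)
    | cast j₀ =>
        rw [snoc_w_castSucc] at hw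
        exact Fin.castSucc_le_castSucc_iff.2 (π.le_blockMax hw)
  · apply Finset.le_max'
    exact Finset.mem_filter.2 ⟨Finset.mem_univ _, by rw [snoc_w_castSucc, π.w_blockMax]⟩

lemma blockMax_snoc_self (π : SetPartition n K) (d : Fin K) :
    (π.snoc d).blockMax d = Fin.last n := by
  apply le_antisymm
  · exact Fin.le_last _
  · apply Finset.le_max'
    exact Finset.mem_filter.2 ⟨Finset.mem_univ _, by rw [snoc_w_last]⟩

lemma nrinv_snoc_castSucc (π : SetPartition n K) (d : Fin K) (b : Fin n) :
    (π.snoc d).nrinv b.castSucc = π.nrinv b + (if π.w b < d then 1 else 0) := by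
  rw [nrinv_eq, Fin.sum_univ_castSucc, nrinv_eq]
  congr 1
  · refine Finset.sum_congr rfl fun a _ => ?_
    refine if_congr ?_ rfl rfl
    rw [Fin.castSucc_lt_castSucc_iff, snoc_w_castSucc, snoc_w_castSucc]
  · refine if_congr ?_ rfl rfl
    rw [snoc_w_last, snoc_w_castSucc]
    simp [Fin.castSucc_lt_last]

lemma nrinv_last (π : SetPartition (n + 1) K) : π.nrinv (Fin.last n) = 0 := by
  rw [nrinv_eq]
  apply Finset.sum_eq_zero
  intro a _
  rw [if_neg]
  rintro ⟨h, _⟩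
  exact absurd ((Fin.le_last a).trans_lt h) (lt_irrefl _)

lemma nrinv_blockMax_snoc_ne (π : SetPartition n K) {d c : Fin K} (h : c ≠ d) :
    (π.snoc d).nrinv ((π.snoc d).blockMax c)
      = π.nrinv (π.blockMax c) + (if c < d then 1 else 0) := by
  rw [blockMax_snoc_ne π h, nrinv_snoc_castSucc, π.w_blockMax]

lemma nrinv_blockMax_snoc_self (π : SetPartition n K) (d : Fin K) :
    (π.snoc d).nrinv ((π.snoc d).blockMax d) = 0 := by
  rw [blockMax_snoc_self, nrinv_last]

lemma ros_snocNew (π : SetPartition n K) : π.snocNew.ros = π.ros := by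
  classical
  rw [ros_eq, Fin.sum_univ_castSucc]
  have h2 : (∑ j, if π.snocNew.IsOpener j ∧ j < Fin.last n ∧
      π.snocNew.w (Fin.last n) < π.snocNew.w j then 1 else 0) = 0 := by
    apply Finset.sum_eq_zero
    intro j _
    rw [if_neg]
    rintro ⟨_, hlt, hw⟩
    induction j using Fin.lastCases with
    | last => exact absurd hlt (lt_irrefl _)
    | cast j₀ =>
        rw [snocNew_w_last, snocNew_w_castSucc] at hw
        exact absurd hw (by simp [Fin.le_last, not_lt, (Fin.castSucc_lt_last _).le])
  rw [h2, add_zero, ros_eq]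
  refine Finset.sum_congr rfl fun i₀ _ => ?_
  rw [Fin.sum_univ_castSucc]
  have hlast : ¬ (π.snocNew.IsOpener (Fin.last n) ∧ Fin.last n < i₀.castSucc ∧
      π.snocNew.w i₀.castSucc < π.snocNew.w (Fin.last n)) := by
    rintro ⟨_, hlt, _⟩
    exact absurd ((Fin.le_last _).trans_lt hlt) (lt_irrefl _)
  rw [if_neg hlast, add_zero]
  refine Finset.sum_congr rfl fun j _ => ?_
  refine if_congr ?_ rfl rfl
  rw [isOpener_snocNew_castSucc, Fin.castSucc_lt_castSucc_iff, snocNew_w_castSucc,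
    snocNew_w_castSucc, Fin.castSucc_lt_castSucc_iff]

lemma lcs_snocNew (π : SetPartition n K) : π.snocNew.lcs = π.lcs + K := by
  classical
  rw [lcs_eq, Fin.sum_univ_castSucc]
  have h2 : (∑ j, if π.snocNew.IsCloser j ∧ j < Fin.last n ∧
      π.snocNew.w j < π.snocNew.w (Fin.last n) then 1 else 0) = K := by
    rw [Fin.sum_univ_castSucc]
    have hlast : ¬ (π.snocNew.IsCloser (Fin.last n) ∧ Fin.last n < Fin.last n ∧
        π.snocNew.w (Fin.last n) < π.snocNew.w (Fin.last n)) := by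
      rintro ⟨_, h, _⟩; exact absurd h (lt_irrefl _)
    rw [if_neg hlast, add_zero]
    have : (∑ j : Fin n, if π.snocNew.IsCloser j.castSucc ∧ j.castSucc < Fin.last n ∧
        π.snocNew.w j.castSucc < π.snocNew.w (Fin.last n) then 1 else 0)
        = ∑ j : Fin n, if π.IsCloser j ∧ True then 1 else 0 := by
      refine Finset.sum_congr rfl fun j _ => ?_
      refine if_congr ?_ rfl rfl
      rw [isCloser_snocNew_castSucc, snocNew_w_castSucc, snocNew_w_last]
      simp [Fin.castSucc_lt_last]
    rw [this, ← Finset.card_filter, π.card_closer_filter (fun _ => True)]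
    simp
  rw [h2, lcs_eq]
  congr 1
  refine Finset.sum_congr rfl fun i₀ _ => ?_
  rw [Fin.sum_univ_castSucc]
  have hlast : ¬ (π.snocNew.IsCloser (Fin.last n) ∧ Fin.last n < i₀.castSucc ∧
      π.snocNew.w (Fin.last n) < π.snocNew.w i₀.castSucc) := by
    rintro ⟨_, hlt, _⟩
    exact absurd ((Fin.le_last _).trans_lt hlt) (lt_irrefl _)
  rw [if_neg hlast, add_zero]
  refine Finset.sum_congr rfl fun j _ => ?_
  refine if_congr ?_ rfl rfl
  rw [isCloser_snocNew_castSucc, Fin.castSucc_lt_castSucc_iff, snocNew_w_castSucc,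
    snocNew_w_castSucc, Fin.castSucc_lt_castSucc_iff]

lemma mak_snocNew (π : SetPartition n K) : π.snocNew.mak = π.mak + K := by
  unfold mak
  rw [ros_snocNew, lcs_snocNew]
  omega

lemma blockMax_snocNew_castSucc (π : SetPartition n K) (c : Fin K) :
    π.snocNew.blockMax c.castSucc = (π.blockMax c).castSucc := by
  apply le_antisymm
  · apply Finset.max'_le
    intro j hj
    have hw : π.snocNew.w j = c.castSucc := (Finset.mem_filter.1 hj).2
    induction j using Fin.lastCases with
    | last =>
        rw [snocNew_w_last] at hw
        exact absurd hw.symm (Fin.castSucc_lt_last c).ne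
    | cast j₀ =>
        rw [snocNew_w_castSucc, Fin.castSucc_inj] at hw
        exact Fin.castSucc_le_castSucc_iff.2 (π.le_blockMax hw)
  · apply Finset.le_max'
    exact Finset.mem_filter.2 ⟨Finset.mem_univ _, by rw [snocNew_w_castSucc, π.w_blockMax]⟩

lemma nrinv_blockMax_snocNew_castSucc (π : SetPartition n K) (c : Fin K) :
    π.snocNew.nrinv (π.snocNew.blockMax c.castSucc) = π.nrinv (π.blockMax c) + 1 := by
  rw [blockMax_snocNew_castSucc, nrinv_eq, Fin.sum_univ_castSucc, nrinv_eq]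
  congr 1
  · refine Finset.sum_congr rfl fun a _ => ?_
    refine if_congr ?_ rfl rfl
    rw [Fin.castSucc_lt_castSucc_iff, snocNew_w_castSucc, snocNew_w_castSucc,
      Fin.castSucc_lt_castSucc_iff]
  · have hcond : (π.blockMax c).castSucc < Fin.last n ∧
        π.snocNew.w (π.blockMax c).castSucc < π.snocNew.w (Fin.last n) := by
      refine ⟨Fin.castSucc_lt_last _, ?_⟩
      rw [snocNew_w_castSucc, snocNew_w_last]
      exact Fin.castSucc_lt_last _
    rw [if_pos hcond]

lemma nrinv_blockMax_snocNew_last (π : SetPartition n K) :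
    π.snocNew.nrinv (π.snocNew.blockMax (Fin.last K)) = 0 := by
  have hbm : π.snocNew.blockMax (Fin.last K) = Fin.last n := by
    apply le_antisymm
    · exact Fin.le_last _
    · exact Finset.le_max' _ _ (Finset.mem_filter.2 ⟨Finset.mem_univ _, by rw [snocNew_w_last]⟩)
  rw [hbm, nrinv_last]

end SetPartition
namespace SetPartition

variable {n K : ℕ}

/-- The decomposition map: a partition of `[n+1]` with `K+1` blocks is obtained from a
partition of `[n]` by appending either an old letter or the new letter `K`. -/
def decomp (n K : ℕ) :
    (SetPartition n (K + 1) × Fin (K + 1)) ⊕ SetPartition n K → SetPartition (n + 1) (K + 1) :=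
  Sum.elim (fun x => x.1.snoc x.2) (fun π => π.snocNew)

lemma decomp_injective (n K : ℕ) : Function.Injective (decomp n K) := by
  rintro (⟨π₁, d₁⟩ | π₁) (⟨π₂, d₂⟩ | π₂) h <;> simp only [decomp, Sum.elim_inl, Sum.elim_inr] at h
  · have hw := congrArg w h
    have h1 : π₁ = π₂ := by
      apply ext'
      funext j
      have := congrFun hw j.castSucc
      simpa using this
    have h2 : d₁ = d₂ := by
      have := congrFun hw (Fin.last n)
      simpa using this
    rw [h1, h2]
  · exfalso
    have hw := congrArg w h
    have hd : d₁ = Fin.last K := by simpa using congrFun hw (Fin.last n)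
    obtain ⟨j, hj⟩ := π₁.surj d₁
    have := congrFun hw j.castSucc
    simp only [snoc_w_castSucc, snocNew_w_castSucc] at this
    rw [hj, hd] at this
    exact (Fin.castSucc_lt_last (π₂.w j)).ne this.symm
  · exfalso
    have hw := congrArg w h
    have hd : d₂ = Fin.last K := by simpa using (congrFun hw (Fin.last n)).symm
    obtain ⟨j, hj⟩ := π₂.surj d₂
    have := congrFun hw j.castSucc
    simp only [snoc_w_castSucc, snocNew_w_castSucc] at this
    rw [hj, hd] at this
    exact (Fin.castSucc_lt_last (π₁.w j)).ne this
  · congr 1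
    apply ext'
    funext j
    have := congrFun (congrArg w h) j.castSucc
    simp only [snocNew_w_castSucc, Fin.castSucc_inj] at this
    exact this

lemma decomp_surjective (n K : ℕ) : Function.Surjective (decomp n K) := by
  intro σ
  by_cases h : ∃ j : Fin n, σ.w j.castSucc = σ.w (Fin.last n)
  · -- last letter is old
    refine ⟨Sum.inl ⟨⟨fun j => σ.w j.castSucc, ?_, ?_⟩, σ.w (Fin.last n)⟩, ?_⟩
    · intro c
      obtain ⟨j, hj⟩ := σ.surj c
      induction j using Fin.lastCases with
      | last =>
          obtain ⟨j₀, hj₀⟩ := h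
          exact ⟨j₀, by show σ.w j₀.castSucc = c; rw [hj₀, hj]⟩
      | cast j₀ => exact ⟨j₀, hj⟩
    · intro i c hc
      obtain ⟨j, hj, hw⟩ := σ.rgf i.castSucc c hc
      have hne : j ≠ Fin.last n := Fin.ne_last_of_lt (hj.trans_le (Fin.le_last _))
      obtain ⟨j₀, rfl⟩ := Fin.exists_castSucc_eq.2 hne
      exact ⟨j₀, by simpa using hj, hw⟩
    · apply ext'
      funext j
      simp only [decomp, Sum.elim_inl]
      induction j using Fin.lastCases with
      | last => simp [snoc]
      | cast j₀ => simp [snoc]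
  · -- last letter is new
    have hlast : σ.w (Fin.last n) = Fin.last K := by
      by_contra hne
      have hlt : σ.w (Fin.last n) < Fin.last K := (Fin.le_last _).lt_of_ne hne
      obtain ⟨j, hj⟩ := σ.surj (Fin.last K)
      obtain ⟨j', hj', hw'⟩ := σ.rgf j (σ.w (Fin.last n)) (by rw [hj]; exact hlt)
      have hne' : j' ≠ Fin.last n := by
        intro he
        rw [he] at hj'
        exact absurd ((Fin.le_last j).trans_lt hj') (lt_irrefl _)
      obtain ⟨j₀, rfl⟩ := Fin.exists_castSucc_eq.2 hne'
      exact h ⟨j₀, hw'⟩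
    have hother : ∀ j : Fin n, σ.w j.castSucc ≠ Fin.last K := by
      intro j hj
      exact h ⟨j, by rw [hj, hlast]⟩
    refine ⟨Sum.inr ⟨fun j => (σ.w j.castSucc).castPred (hother j), ?_, ?_⟩, ?_⟩
    · intro c
      obtain ⟨j, hj⟩ := σ.surj c.castSucc
      have hne : j ≠ Fin.last n := by
        intro he
        rw [he, hlast] at hj
        exact (Fin.castSucc_lt_last c).ne hj.symm
      obtain ⟨j₀, rfl⟩ := Fin.exists_castSucc_eq.2 hne
      refine ⟨j₀, ?_⟩
      have : ((σ.w j₀.castSucc).castPred (hother j₀)).castSucc = c.castSucc := by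
        rw [Fin.castSucc_castPred, hj]
      exact Fin.castSucc_inj.1 this
    · intro i c hc
      have hc' : c.castSucc < σ.w i.castSucc := by
        have := Fin.castSucc_lt_castSucc_iff.2 hc
        rwa [Fin.castSucc_castPred] at this
      obtain ⟨j, hj, hw⟩ := σ.rgf i.castSucc c.castSucc hc'
      have hne : j ≠ Fin.last n := Fin.ne_last_of_lt (hj.trans_le (Fin.le_last _))
      obtain ⟨j₀, rfl⟩ := Fin.exists_castSucc_eq.2 hne
      refine ⟨j₀, by simpa using hj, ?_⟩
      have : ((σ.w j₀.castSucc).castPred (hother j₀)).castSucc = c.castSucc := by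
        rw [Fin.castSucc_castPred, hw]
      exact Fin.castSucc_inj.1 this
    · apply ext'
      funext j
      simp only [decomp, Sum.elim_inr]
      induction j using Fin.lastCases with
      | last => rw [snocNew_w_last, hlast]
      | cast j₀ => rw [snocNew_w_castSucc]; exact Fin.castSucc_castPred _ (hother j₀)

lemma sum_decomp {M : Type*} [AddCommMonoid M] (f : SetPartition (n + 1) (K + 1) → M) :
    ∑ σ : SetPartition (n + 1) (K + 1), f σ
      = (∑ π : SetPartition n (K + 1), ∑ d : Fin (K + 1), f (π.snoc d))
        + ∑ π : SetPartition n K, f π.snocNew := by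
  rw [← Fintype.sum_bijective (decomp n K)
    ⟨decomp_injective n K, decomp_surjective n K⟩ (fun x => f (decomp n K x)) f (fun x => rfl)]
  rw [Fintype.sum_sum_type]
  congr 1
  rw [Fintype.sum_prod_type]
  rfl

end SetPartition
namespace SetPartition

lemma card_filter_lt_fin {N : ℕ} (d : Fin N) :
    (Finset.univ.filter (· < d)).card = (d : ℕ) := by
  rw [show Finset.univ.filter (· < d) = Finset.Iio d by ext c; simp, Fin.card_Iio]

/-- The rank-permutation sum identity. -/
lemma perm_sum {K : ℕ} (T : Finset (Fin K)) (q : ℝ) (hq : q ≠ 0) :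
    ∑ d : Fin K,
        q ^ ((K : ℤ) - 1 - ((T.filter (· < d)).card : ℤ)
          + (if d ∈ T then 0 else (d : ℤ) - ((K : ℤ) - 1)))
      = ∑ d : Fin K, q ^ ((d : ℕ) : ℤ) := by
  classical
  set a : Fin K → ℕ := fun d => (T.filter (· < d)).card with ha
  set b : Fin K → ℕ := fun d => (Finset.univ.filter fun c => c < d ∧ c ∉ T).card with hb
  have hab : ∀ d : Fin K, a d + b d = (d : ℕ) := by
    intro d
    rw [← card_filter_lt_fin d, ha, hb]
    simp only []
    rw [show T.filter (· < d) = Finset.univ.filter (fun c => c < d ∧ c ∈ T) by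
      ext c; simp [and_comm]]
    rw [← Finset.filter_filter, ← Finset.filter_filter,
      Finset.card_filter_add_card_filter_not]
  have haT : ∀ d ∈ T, a d + 1 ≤ T.card := by
    intro d hd
    have : T.filter (· < d) ⊆ T.erase d := by
      intro c hc
      rw [Finset.mem_erase]
      exact ⟨(Finset.mem_filter.1 hc).2.ne, (Finset.mem_filter.1 hc).1⟩
    have h2 := Finset.card_le_card this
    rw [Finset.card_erase_of_mem hd] at h2
    have : 1 ≤ T.card := Finset.card_pos.2 ⟨d, hd⟩
    have hval : a d = (T.filter (· < d)).card := rfl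
    omega
  have hbT : ∀ d : Fin K, d ∉ T → b d + T.card + 1 ≤ K := by
    intro d hd
    have hsub : (Finset.univ.filter fun c => c < d ∧ c ∉ T) ∪ T ∪ {d} ⊆ Finset.univ :=
      Finset.subset_univ _
    have hcard := Finset.card_le_card hsub
    have hdisj1 : Disjoint (Finset.univ.filter fun c => c < d ∧ c ∉ T) T := by
      rw [Finset.disjoint_left]
      intro c hc
      exact (Finset.mem_filter.1 hc).2.2
    have hdisj2 : Disjoint ((Finset.univ.filter fun c => c < d ∧ c ∉ T) ∪ T) {d} := by
      rw [Finset.disjoint_right]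
      intro c hc
      rw [Finset.mem_singleton] at hc
      subst hc
      rw [Finset.mem_union]
      rintro (hc | hc)
      · exact absurd (Finset.mem_filter.1 hc).2.1 (lt_irrefl _)
      · exact hd hc
    rw [Finset.card_union_of_disjoint hdisj2, Finset.card_union_of_disjoint hdisj1,
      Finset.card_singleton, Finset.card_univ, Fintype.card_fin] at hcard
    have hval : b d = (Finset.univ.filter fun c => c < d ∧ c ∉ T).card := rfl
    omega
  have hTK : T.card ≤ K := by
    have := Finset.card_le_card (Finset.subset_univ T)
    rwa [Finset.card_univ, Fintype.card_fin] at this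
  -- the permutation
  have hKpos : ∀ d : Fin K, (d:ℕ) < K := fun d => d.isLt
  set e : Fin K → Fin K := fun d =>
    if hd : d ∈ T then ⟨K - 1 - a d, by have := haT d hd; have := hKpos d; omega⟩
    else ⟨b d, by have := hab d; have := hKpos d; omega⟩ with he
  have hmono_a : ∀ d d', d ∈ T → d' ∈ T → d < d' → a d < a d' := by
    intro d d' hd hd' hlt
    apply Finset.card_lt_card
    rw [Finset.ssubset_iff_of_subset]
    · exact ⟨d, Finset.mem_filter.2 ⟨hd, hlt⟩, fun hc => absurd (Finset.mem_filter.1 hc).2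
        (lt_irrefl d)⟩
    · intro c hc
      exact Finset.mem_filter.2 ⟨(Finset.mem_filter.1 hc).1,
        (Finset.mem_filter.1 hc).2.trans hlt⟩
  have hmono_b : ∀ d d', d ∉ T → d < d' → b d < b d' := by
    intro d d' hd hlt
    apply Finset.card_lt_card
    rw [Finset.ssubset_iff_of_subset]
    · refine ⟨d, Finset.mem_filter.2 ⟨Finset.mem_univ _, hlt, hd⟩, fun hc =>
        absurd (Finset.mem_filter.1 hc).2.1 (lt_irrefl d)⟩
    · intro c hc
      exact Finset.mem_filter.2 ⟨Finset.mem_univ _,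
        (Finset.mem_filter.1 hc).2.1.trans hlt, (Finset.mem_filter.1 hc).2.2⟩
  have hinj : Function.Injective e := by
    intro d d' hdd
    by_contra hne
    wlog hlt : d < d' generalizing d d'
    · exact this hdd.symm (Ne.symm hne) ((Ne.lt_or_gt hne).resolve_left hlt)
    rw [he] at hdd
    simp only [] at hdd
    by_cases hd : d ∈ T <;> by_cases hd' : d' ∈ T
    · rw [dif_pos hd, dif_pos hd'] at hdd
      have := hmono_a d d' hd hd' hlt
      have h1 := haT d hd
      have h2 := haT d' hd'
      have := Fin.mk.injEq (K - 1 - a d) _ (K - 1 - a d') _ ▸ hdd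
      have hv : K - 1 - a d = K - 1 - a d' := congrArg Fin.val hdd
      omega
    · rw [dif_pos hd, dif_neg hd'] at hdd
      have hv : K - 1 - a d = b d' := congrArg Fin.val hdd
      have h1 := haT d hd
      have h2 := hbT d' hd'
      omega
    · rw [dif_neg hd, dif_pos hd'] at hdd
      have hv : b d = K - 1 - a d' := congrArg Fin.val hdd
      have h1 := haT d' hd'
      have h2 := hbT d hd
      omega
    · rw [dif_neg hd, dif_neg hd'] at hdd
      have hv : b d = b d' := congrArg Fin.val hdd
      have := hmono_b d d' hd hlt
      omega
  have hbij : Function.Bijective e := Finite.injective_iff_bijective.1 hinj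
  have hsum := Fintype.sum_bijective e hbij
    (fun d => q ^ (((e d : Fin K) : ℕ) : ℤ)) (fun d => q ^ ((d : ℕ) : ℤ)) (fun d => rfl)
  rw [← hsum]
  refine Finset.sum_congr rfl fun d _ => ?_
  congr 1
  rw [he]
  by_cases hd : d ∈ T
  · simp only [dif_pos hd, if_pos hd]
    have h1 := haT d hd
    have h2 := hKpos d
    have h3 : a d ≤ (d:ℕ) := by have := hab d; omega
    have hval : (T.filter (· < d)).card = a d := rfl
    have hTK' := hTK
    rw [hval]
    push_cast
    omega
  · simp only [dif_neg hd, if_neg hd]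
    have h1 := hab d
    have hval : (T.filter (· < d)).card = a d := rfl
    rw [hval]
    push_cast
    omega

end SetPartition
namespace SetPartition

variable {n K : ℕ}

lemma sum_nrinv_snoc (π : SetPartition n K) (d : Fin K) (U : Finset (Fin K)) :
    ∑ c ∈ U, (((π.snoc d).nrinv ((π.snoc d).blockMax c) : ℤ))
      = ∑ c ∈ U.erase d, ((π.nrinv (π.blockMax c) : ℤ))
        + ((U.filter (· < d)).card : ℤ) := by
  classical
  rw [← Finset.sum_erase (s := U)
    (f := fun c => (((π.snoc d).nrinv ((π.snoc d).blockMax c) : ℤ))) (a := d)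
    (by show (((π.snoc d).nrinv ((π.snoc d).blockMax d) : ℤ)) = 0
        rw [nrinv_blockMax_snoc_self]; norm_num)]
  have h1 : ∀ c ∈ U.erase d, (((π.snoc d).nrinv ((π.snoc d).blockMax c) : ℤ))
      = ((π.nrinv (π.blockMax c) : ℤ)) + (if c < d then 1 else 0) := by
    intro c hc
    rw [nrinv_blockMax_snoc_ne π (Finset.mem_erase.1 hc).1]
    push_cast
    split <;> simp
  rw [Finset.sum_congr rfl h1, Finset.sum_add_distrib]
  congr 1
  rw [Finset.sum_boole, Finset.filter_erase]
  congr 2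
  apply Finset.erase_eq_of_notMem
  intro hd
  exact absurd (Finset.mem_filter.1 hd).2 (lt_irrefl d)

lemma sum_insert_nrinv (π : SetPartition n K) (d : Fin K) (U : Finset (Fin K)) :
    ∑ c ∈ insert d U, ((π.nrinv (π.blockMax c) : ℤ))
      = ((π.nrinv (π.blockMax d) : ℤ)) + ∑ c ∈ U.erase d, ((π.nrinv (π.blockMax c) : ℤ)) := by
  classical
  rw [show insert d U = insert d (U.erase d) by
    ext c
    simp only [Finset.mem_insert, Finset.mem_erase]
    constructor
    · rintro (rfl | hc)
      · exact Or.inl rfl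
      · by_cases hcd : c = d
        · exact Or.inl hcd
        · exact Or.inr ⟨hcd, hc⟩
    · rintro (rfl | ⟨_, hc⟩)
      · exact Or.inl rfl
      · exact Or.inr hc]
  rw [Finset.sum_insert (Finset.notMem_erase d U)]

lemma snoc_exponent (π : SetPartition n K) (d : Fin K) (U : Finset (Fin K)) :
    ((π.snoc d).mak : ℤ)
        - ∑ c ∈ U, (((π.snoc d).nrinv ((π.snoc d).blockMax c) : ℤ))
      = ((π.mak : ℤ) - ∑ c ∈ insert d U, ((π.nrinv (π.blockMax c) : ℤ)))
        + (((K : ℤ) - 1) - ((U.filter (· < d)).card : ℤ)) := by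
  have hm := π.mak_snoc d
  rw [sum_nrinv_snoc, sum_insert_nrinv]
  omega

lemma sum_nrinv_snocNew (π : SetPartition n K) (U : Finset (Fin (K + 1))) :
    ∑ c ∈ U, ((π.snocNew.nrinv (π.snocNew.blockMax c) : ℤ))
      = ∑ c ∈ Finset.univ.filter (fun c : Fin K => c.castSucc ∈ U),
          ((π.nrinv (π.blockMax c) : ℤ))
        + ((Finset.univ.filter (fun c : Fin K => c.castSucc ∈ U)).card : ℤ) := by
  classical
  rw [← Finset.sum_erase (s := U)
    (f := fun c => ((π.snocNew.nrinv (π.snocNew.blockMax c) : ℤ)))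
    (a := Fin.last K)
    (by show ((π.snocNew.nrinv (π.snocNew.blockMax (Fin.last K)) : ℤ)) = 0
        rw [nrinv_blockMax_snocNew_last]; norm_num)]
  have hmap : U.erase (Fin.last K)
      = (Finset.univ.filter (fun c : Fin K => c.castSucc ∈ U)).map
          Fin.castSuccEmb := by
    ext c
    simp only [Finset.mem_erase, Finset.mem_map, Finset.mem_filter, Finset.mem_univ,
      true_and]
    constructor
    · rintro ⟨hne, hc⟩
      obtain ⟨c₀, rfl⟩ := Fin.exists_castSucc_eq.2 hne
      exact ⟨c₀, hc, rfl⟩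
    · rintro ⟨c₀, hc₀, rfl⟩
      exact ⟨(Fin.castSucc_lt_last c₀).ne, hc₀⟩
  rw [hmap, Finset.sum_map]
  have h2 : ∀ c₀ : Fin K, c₀ ∈ Finset.univ.filter (fun c : Fin K => c.castSucc ∈ U) →
      ((π.snocNew.nrinv (π.snocNew.blockMax (Fin.castSuccEmb c₀)) : ℤ))
        = ((π.nrinv (π.blockMax c₀) : ℤ)) + 1 := by
    intro c₀ _
    rw [show (Fin.castSuccEmb c₀ : Fin (K+1)) = c₀.castSucc from rfl,
      nrinv_blockMax_snocNew_castSucc]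
    push_cast
    ring
  rw [Finset.sum_congr rfl h2, Finset.sum_add_distrib, Finset.sum_const]
  simp

lemma snocNew_exponent (π : SetPartition n K) (U : Finset (Fin (K + 1))) :
    (π.snocNew.mak : ℤ)
        - ∑ c ∈ U, ((π.snocNew.nrinv (π.snocNew.blockMax c) : ℤ))
      = ((π.mak : ℤ) - ∑ c ∈ Finset.univ.filter (fun c : Fin K => c.castSucc ∈ U),
            ((π.nrinv (π.blockMax c) : ℤ)))
        + ((K : ℤ) - ((Finset.univ.filter (fun c : Fin K => c.castSucc ∈ U)).card : ℤ)) := by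
  have hm := π.mak_snocNew
  rw [sum_nrinv_snocNew]
  omega

lemma sum_coe_sub_eq (U : Finset (Fin (K + 1))) :
    ∑ c ∈ U, (((c : ℕ) : ℤ) - (K : ℤ))
      = ∑ c ∈ Finset.univ.filter (fun c : Fin K => c.castSucc ∈ U),
          (((c : ℕ) : ℤ) - (K : ℤ)) := by
  classical
  rw [← Finset.sum_erase (s := U) (f := fun c => (((c : ℕ) : ℤ) - (K : ℤ)))
    (a := Fin.last K) (by simp)]
  have hmap : U.erase (Fin.last K)
      = (Finset.univ.filter (fun c : Fin K => c.castSucc ∈ U)).map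
          Fin.castSuccEmb := by
    ext c
    simp only [Finset.mem_erase, Finset.mem_map, Finset.mem_filter, Finset.mem_univ,
      true_and]
    constructor
    · rintro ⟨hne, hc⟩
      obtain ⟨c₀, rfl⟩ := Fin.exists_castSucc_eq.2 hne
      exact ⟨c₀, hc, rfl⟩
    · rintro ⟨c₀, hc₀, rfl⟩
      exact ⟨(Fin.castSucc_lt_last c₀).ne, hc₀⟩
  rw [hmap, Finset.sum_map]
  refine Finset.sum_congr rfl fun c₀ _ => ?_
  simp [Fin.castSuccEmb]

lemma sum_insert_coe_sub (d : Fin K) (U : Finset (Fin K)) :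
    ∑ c ∈ insert d U, (((c : ℕ) : ℤ) - ((K : ℤ) - 1))
      = (∑ c ∈ U, (((c : ℕ) : ℤ) - ((K : ℤ) - 1)))
        + (if d ∈ U then 0 else ((d : ℕ) : ℤ) - ((K : ℤ) - 1)) := by
  classical
  by_cases hd : d ∈ U
  · rw [Finset.insert_eq_self.2 hd, if_pos hd, add_zero]
  · rw [Finset.sum_insert hd, if_neg hd]
    ring

end SetPartition
namespace SetPartition

lemma main_H (q : ℝ) (hq : 0 < q) :
    ∀ m K : ℕ, ∀ T : Finset (Fin K),
      (∑ π : SetPartition m K,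
        q ^ ((π.mak : ℤ) - ∑ c ∈ T, ((π.nrinv (π.blockMax c) : ℤ))))
      = q ^ (∑ c ∈ T, (((c : ℕ) : ℤ) - ((K : ℤ) - 1)))
          * ∑ π : SetPartition m K, q ^ ((π.mak : ℤ)) := by
  have hq0 : q ≠ 0 := ne_of_gt hq
  intro m
  induction m with
  | zero =>
      intro K T
      match K, T with
      | 0, T =>
          have hT : T = ∅ := Finset.eq_empty_of_isEmpty T
          subst hT
          simp
      | K + 1, T =>
          haveI : IsEmpty (SetPartition 0 (K + 1)) :=
            ⟨fun π => (π.surj 0).elim (fun j _ => j.elim0)⟩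
          simp [Finset.univ_eq_empty]
  | succ m IH =>
      intro K T
      match K, T with
      | 0, T =>
          haveI : IsEmpty (SetPartition (m + 1) 0) :=
            ⟨fun π => (π.w ⟨0, Nat.succ_pos m⟩).elim0⟩
          simp [Finset.univ_eq_empty]
      | K + 1, T =>
          have hstep : ∀ U : Finset (Fin (K + 1)),
              (∑ σ : SetPartition (m + 1) (K + 1),
                q ^ ((σ.mak : ℤ) - ∑ c ∈ U, ((σ.nrinv (σ.blockMax c) : ℤ))))
              = q ^ (∑ c ∈ U, (((c : ℕ) : ℤ) - (K : ℤ)))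
                * ((∑ d : Fin (K + 1), q ^ (((d : ℕ) : ℤ)))
                    * (∑ π : SetPartition m (K + 1), q ^ ((π.mak : ℤ)))
                  + q ^ ((K : ℤ)) * (∑ π : SetPartition m K, q ^ ((π.mak : ℤ)))) := by
            intro U
            rw [sum_decomp (f := fun σ => q ^ ((σ.mak : ℤ)
              - ∑ c ∈ U, ((σ.nrinv (σ.blockMax c) : ℤ))))]
            have hold : (∑ π : SetPartition m (K + 1), ∑ d : Fin (K + 1),
                q ^ (((π.snoc d).mak : ℤ)
                  - ∑ c ∈ U, (((π.snoc d).nrinv ((π.snoc d).blockMax c) : ℤ))))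
                = q ^ (∑ c ∈ U, (((c : ℕ) : ℤ) - (K : ℤ)))
                  * ((∑ d : Fin (K + 1), q ^ (((d : ℕ) : ℤ)))
                    * (∑ π : SetPartition m (K + 1), q ^ ((π.mak : ℤ)))) := by
              rw [Finset.sum_comm]
              have hd : ∀ d : Fin (K + 1),
                  (∑ π : SetPartition m (K + 1),
                    q ^ (((π.snoc d).mak : ℤ)
                      - ∑ c ∈ U, (((π.snoc d).nrinv ((π.snoc d).blockMax c) : ℤ))))
                  = q ^ ((∑ c ∈ U, (((c : ℕ) : ℤ) - (K : ℤ)))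
                      + (((K + 1 : ℕ) : ℤ) - 1 - ((U.filter (· < d)).card : ℤ)
                        + (if d ∈ U then 0 else (d : ℤ) - (((K + 1 : ℕ) : ℤ) - 1))))
                    * (∑ π : SetPartition m (K + 1), q ^ ((π.mak : ℤ))) := by
                intro d
                have h1 : ∀ π : SetPartition m (K + 1),
                    π ∈ (Finset.univ : Finset (SetPartition m (K + 1))) →
                    q ^ (((π.snoc d).mak : ℤ)
                      - ∑ c ∈ U, (((π.snoc d).nrinv ((π.snoc d).blockMax c) : ℤ)))
                    = q ^ ((((K + 1 : ℕ) : ℤ) - 1) - ((U.filter (· < d)).card : ℤ))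
                      * q ^ ((π.mak : ℤ)
                        - ∑ c ∈ insert d U, ((π.nrinv (π.blockMax c) : ℤ))) := by
                  intro π _
                  rw [snoc_exponent π d U, zpow_add₀ hq0, mul_comm]
                rw [Finset.sum_congr rfl h1, ← Finset.mul_sum, IH (K + 1) (insert d U),
                  ← mul_assoc, ← zpow_add₀ hq0]
                congr 2
                rw [sum_insert_coe_sub]
                have hnorm : ∑ c ∈ U, (((c : ℕ) : ℤ) - (((K + 1 : ℕ) : ℤ) - 1))
                    = ∑ c ∈ U, (((c : ℕ) : ℤ) - (K : ℤ)) :=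
                  Finset.sum_congr rfl fun c _ => by push_cast; ring
                rw [hnorm]
                by_cases hdU : d ∈ U <;> simp only [hdU, if_true, if_false] <;> push_cast <;>
                  ring
              rw [Finset.sum_congr rfl (fun d _ => hd d)]
              have h2 : ∀ d : Fin (K + 1), d ∈ (Finset.univ : Finset (Fin (K + 1))) →
                  q ^ ((∑ c ∈ U, (((c : ℕ) : ℤ) - (K : ℤ)))
                      + (((K + 1 : ℕ) : ℤ) - 1 - ((U.filter (· < d)).card : ℤ)
                        + (if d ∈ U then 0 else (d : ℤ) - (((K + 1 : ℕ) : ℤ) - 1))))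
                    * (∑ π : SetPartition m (K + 1), q ^ ((π.mak : ℤ)))
                  = (q ^ (∑ c ∈ U, (((c : ℕ) : ℤ) - (K : ℤ)))
                      * (∑ π : SetPartition m (K + 1), q ^ ((π.mak : ℤ))))
                    * q ^ (((K + 1 : ℕ) : ℤ) - 1 - ((U.filter (· < d)).card : ℤ)
                        + (if d ∈ U then 0 else (d : ℤ) - (((K + 1 : ℕ) : ℤ) - 1))) := by
                intro d _
                rw [zpow_add₀ hq0]
                ring
              rw [Finset.sum_congr rfl h2, ← Finset.mul_sum, perm_sum U q hq0]
              ring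
            have hnew : (∑ π : SetPartition m K,
                q ^ ((π.snocNew.mak : ℤ)
                  - ∑ c ∈ U, ((π.snocNew.nrinv (π.snocNew.blockMax c) : ℤ))))
                = q ^ (∑ c ∈ U, (((c : ℕ) : ℤ) - (K : ℤ)))
                  * (q ^ ((K : ℤ)) * (∑ π : SetPartition m K, q ^ ((π.mak : ℤ)))) := by
              set T' := Finset.univ.filter (fun c : Fin K => c.castSucc ∈ U) with hT'
              have h1 : ∀ π : SetPartition m K,
                  π ∈ (Finset.univ : Finset (SetPartition m K)) →
                  q ^ ((π.snocNew.mak : ℤ)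
                    - ∑ c ∈ U, ((π.snocNew.nrinv (π.snocNew.blockMax c) : ℤ)))
                  = q ^ ((K : ℤ) - (T'.card : ℤ))
                    * q ^ ((π.mak : ℤ) - ∑ c ∈ T', ((π.nrinv (π.blockMax c) : ℤ))) := by
                intro π _
                rw [snocNew_exponent π U, zpow_add₀ hq0, mul_comm]
              rw [Finset.sum_congr rfl h1, ← Finset.mul_sum, IH K T', ← mul_assoc,
                ← zpow_add₀ hq0, sum_coe_sub_eq U, ← mul_assoc, ← zpow_add₀ hq0]
              congr 2
              have hsplit : ∑ c ∈ T', (((c : ℕ) : ℤ) - ((K : ℤ) - 1))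
                  = (∑ c ∈ T', (((c : ℕ) : ℤ) - (K : ℤ))) + (T'.card : ℤ) := by
                rw [show (fun c : Fin K => ((c : ℕ) : ℤ) - ((K : ℤ) - 1))
                    = fun c : Fin K => (((c : ℕ) : ℤ) - (K : ℤ)) + 1 by funext c; ring]
                rw [Finset.sum_add_distrib, Finset.sum_const]
                simp
              rw [hsplit]
              ring
            rw [hold, hnew]
            ring
          have hS : (∑ σ : SetPartition (m + 1) (K + 1), q ^ ((σ.mak : ℤ)))
              = (∑ d : Fin (K + 1), q ^ (((d : ℕ) : ℤ)))
                  * (∑ π : SetPartition m (K + 1), q ^ ((π.mak : ℤ)))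
                + q ^ ((K : ℤ)) * (∑ π : SetPartition m K, q ^ ((π.mak : ℤ))) := by
            have := hstep ∅
            simpa using this
          rw [hstep T, hS]
          congr 2
          refine Finset.sum_congr rfl fun c _ => ?_
          push_cast
          ring

end SetPartition
/-- Let `m ≥ 1` and `k ≥ 0` with `k+1 ≤ m`, and let `i ∈ [k]`. Then for
every real `q > 0`:
`Σ_{π ∈ P(m,k+1)} q^{mak(π) + k - nrinv(g(B_{i+1}),π)} = q^i · Σ_{π ∈ P(m,k+1)} q^{mak(π)}`
(the block `B_{i+1}` having Fin-index `i`). -/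
theorem sum_q_mak_nrinv_eq (m k : ℕ) (hm : 1 ≤ m) (hkm : k + 1 ≤ m)
    (i : ℕ) (hi1 : 1 ≤ i) (hik : i ≤ k) (q : ℝ) (hq : 0 < q) :
    ∑ π : SetPartition m (k + 1),
        q ^ ((π.mak : ℤ) + (k : ℤ) - (π.nrinv (π.blockMax ⟨i, by omega⟩) : ℤ)) =
      q ^ (i : ℤ) * ∑ π : SetPartition m (k + 1), q ^ (π.mak : ℤ) := by
  have hq0 : q ≠ 0 := ne_of_gt hq
  have h := SetPartition.main_H q hq m (k + 1) {⟨i, by omega⟩}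
  simp only [Finset.sum_singleton] at h
  have h1 : ∀ π : SetPartition m (k + 1),
      π ∈ (Finset.univ : Finset (SetPartition m (k + 1))) →
      q ^ ((π.mak : ℤ) + (k : ℤ) - (π.nrinv (π.blockMax ⟨i, by omega⟩) : ℤ))
      = q ^ ((k : ℤ))
        * q ^ ((π.mak : ℤ) - (π.nrinv (π.blockMax ⟨i, by omega⟩) : ℤ)) := by
    intro π _
    rw [← zpow_add₀ hq0]
    congr 1
    ring
  rw [Finset.sum_congr rfl h1, ← Finset.mul_sum, h, ← mul_assoc, ← zpow_add₀ hq0]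
  congr 2
  push_cast
  ring
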